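/- Let m = 2n+k with k = 2r even and define v_j = (1, ξ^j, …, ξ^{rj}) ∈ ℝ × ℂ^r, ξ = exp(2πi/m). For any nonzero x ∈ ℝ × ℂ^r, the function h(t) = 2⟨x, (1, exp(2πit/m), …, exp(2πirt/m))⟩ (real inner product) changes sign at every t where exp(2πit/m) is a simple root of the associated polynomial p(z) = x_r + x_{r-1}z + … + 2x_0 z^r + … + conj(x_r) z^{2r}. Consequently, the sign vector (sign⟨x,v_0⟩, …, sign⟨x,v_{m-1}⟩) has at most k zeros and a sign change at every zero that comes from a simple root. -/

import Mathlib

open scoped Classical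

open Complex Polynomial

/-- sign change from nonzero derivative at a zero -/
lemma aux_sign_change {h : ℝ → ℝ} {t₀ d : ℝ} (hd : HasDerivAt h d t₀) (h0 : h t₀ = 0)
    (hd0 : d ≠ 0) : ∃ δ > 0, ∀ t₁ t₂ : ℝ, t₀ - δ < t₁ → t₁ < t₀ → t₀ < t₂ → t₂ < t₀ + δ →
      h t₁ * h t₂ < 0 := by
  have hs := hasDerivAt_iff_tendsto_slope.mp hd
  have hev : ∀ᶠ t in nhdsWithin t₀ {t₀}ᶜ, |slope h t₀ t - d| < |d| := by
    have := hs (Metric.ball_mem_nhds d (abs_pos.mpr hd0))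
    filter_upwards [this] with t ht
    simpa [Metric.mem_ball, Real.dist_eq] using ht
  rw [eventually_nhdsWithin_iff] at hev
  rw [Metric.eventually_nhds_iff] at hev
  obtain ⟨δ, hδ, hδ'⟩ := hev
  refine ⟨δ, hδ, fun t₁ t₂ ha hb hc he => ?_⟩
  have hne₁ : t₁ ≠ t₀ := ne_of_lt hb
  have hne₂ : t₂ ≠ t₀ := ne_of_gt hc
  have h₁ : |slope h t₀ t₁ - d| < |d| := by
    apply hδ' (by rw [Real.dist_eq]; rw [abs_lt]; constructor <;> linarith) hne₁
  have h₂ : |slope h t₀ t₂ - d| < |d| := by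
    apply hδ' (by rw [Real.dist_eq]; rw [abs_lt]; constructor <;> linarith) hne₂
  have e₁ : h t₁ = slope h t₀ t₁ * (t₁ - t₀) := by
    rw [slope_def_field, h0, sub_zero]; field_simp [sub_ne_zero.mpr hne₁]
  have e₂ : h t₂ = slope h t₀ t₂ * (t₂ - t₀) := by
    rw [slope_def_field, h0, sub_zero]; field_simp [sub_ne_zero.mpr hne₂]
  rw [e₁, e₂]
  rcases lt_or_gt_of_ne hd0 with hneg | hpos
  · rw [abs_of_neg hneg, abs_lt] at h₁ h₂
    have s1 : slope h t₀ t₁ < 0 := by linarith [h₁.2]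
    have s2 : slope h t₀ t₂ < 0 := by linarith [h₂.2]
    exact mul_neg_of_pos_of_neg (mul_pos_of_neg_of_neg s1 (by linarith))
      (mul_neg_of_neg_of_pos s2 (by linarith))
  · rw [abs_of_pos hpos, abs_lt] at h₁ h₂
    have s1 : 0 < slope h t₀ t₁ := by linarith [h₁.1]
    have s2 : 0 < slope h t₀ t₂ := by linarith [h₂.1]
    exact mul_neg_of_neg_of_pos (mul_neg_of_pos_of_neg s1 (by linarith))
      (mul_pos s2 (by linarith))

/-- derivative of t ↦ exp (a * t) as real function -/
lemma aux_exp_deriv (a : ℂ) (t : ℝ) :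
    HasDerivAt (fun s : ℝ => Complex.exp (a * s)) (a * Complex.exp (a * t)) t := by
  have h1 : HasDerivAt (fun s : ℝ => (s : ℂ)) 1 t := by
    exact Complex.ofRealCLM.hasDerivAt (x := t)
  have h2 : HasDerivAt (fun s : ℝ => a * (s : ℂ)) a t := by
    simpa using h1.const_mul a
  have h3 := (Complex.hasDerivAt_exp (a * t)).scomp t h2
  simpa [Function.comp_def, smul_eq_mul, mul_comm] using h3


lemma aux_key (r m : ℕ) (x : ℝ × (Fin r → ℂ)) (t : ℝ) :
    ((2 * (x.1 * 1 + ∑ i : Fin r, (x.2 i * (starRingEnd ℂ) (Complex.exp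
        (2 * (Real.pi : ℂ) * Complex.I * (((i : ℕ) : ℂ) + 1) * (t : ℂ) / (m : ℂ)))).re) : ℝ) : ℂ) *
      Complex.exp (2 * (Real.pi : ℂ) * Complex.I * (t : ℂ) / (m : ℂ)) ^ r =
    (Polynomial.C (2 * (x.1 : ℂ)) * Polynomial.X ^ r +
      ∑ i : Fin r, (Polynomial.C (x.2 i) * Polynomial.X ^ (r - ((i : ℕ) + 1))
        + Polynomial.C ((starRingEnd ℂ) (x.2 i)) * Polynomial.X ^ (r + ((i : ℕ) + 1)))).eval
      (Complex.exp (2 * (Real.pi : ℂ) * Complex.I * (t : ℂ) / (m : ℂ))) := by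
  set θ : ℂ := 2 * (Real.pi : ℂ) * Complex.I * (t : ℂ) / (m : ℂ) with hθ
  have hconjθ : (starRingEnd ℂ) θ = -θ := by
    rw [hθ]
    simp [map_div₀, Complex.conj_I, map_ofNat]
    ring
  have hpow : ∀ a : ℕ, Complex.exp θ ^ a = Complex.exp ((a : ℂ) * θ) := fun a =>
    (Complex.exp_nat_mul θ a).symm
  have harg : ∀ i : Fin r,
      2 * (Real.pi : ℂ) * Complex.I * (((i : ℕ) : ℂ) + 1) * (t : ℂ) / (m : ℂ)
        = (((i : ℕ) : ℂ) + 1) * θ := by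
    intro i; rw [hθ]; ring
  have hterm : ∀ i : Fin r,
      2 * (((x.2 i * (starRingEnd ℂ) (Complex.exp ((((i : ℕ) : ℂ) + 1) * θ))).re : ℝ) : ℂ)
          * Complex.exp θ ^ r
        = x.2 i * Complex.exp θ ^ (r - ((i : ℕ) + 1))
          + (starRingEnd ℂ) (x.2 i) * Complex.exp θ ^ (r + ((i : ℕ) + 1)) := by
    intro i
    have hle : (i : ℕ) + 1 ≤ r := i.2
    have hconj : (starRingEnd ℂ) (Complex.exp ((((i : ℕ) : ℂ) + 1) * θ))
        = Complex.exp (-((((i : ℕ) : ℂ) + 1) * θ)) := by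
      rw [← Complex.exp_conj, map_mul, hconjθ, map_add, map_one, Complex.conj_natCast]
      ring_nf
    have h2re : 2 * (((x.2 i * (starRingEnd ℂ) (Complex.exp ((((i : ℕ) : ℂ) + 1) * θ))).re : ℝ) : ℂ)
        = x.2 i * (starRingEnd ℂ) (Complex.exp ((((i : ℕ) : ℂ) + 1) * θ))
          + (starRingEnd ℂ) (x.2 i * (starRingEnd ℂ) (Complex.exp ((((i : ℕ) : ℂ) + 1) * θ))) := by
      rw [Complex.add_conj]
      push_cast
      ring
    have hconj2 : (starRingEnd ℂ) (x.2 i * (starRingEnd ℂ)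
          (Complex.exp ((((i : ℕ) : ℂ) + 1) * θ)))
        = (starRingEnd ℂ) (x.2 i) * Complex.exp ((((i : ℕ) : ℂ) + 1) * θ) := by
      rw [map_mul, Complex.conj_conj]
    have E1 : Complex.exp (-((((i : ℕ) : ℂ) + 1) * θ)) * Complex.exp ((r : ℂ) * θ)
        = Complex.exp (((r - ((i : ℕ) + 1) : ℕ) : ℂ) * θ) := by
      rw [← Complex.exp_add]
      congr 1
      push_cast [Nat.cast_sub hle]
      ring
    have E2 : Complex.exp ((((i : ℕ) : ℂ) + 1) * θ) * Complex.exp ((r : ℂ) * θ)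
        = Complex.exp (((r + ((i : ℕ) + 1) : ℕ) : ℂ) * θ) := by
      rw [← Complex.exp_add]
      congr 1
      push_cast
      ring
    rw [h2re, hconj2, hconj, hpow r, hpow (r - ((i : ℕ) + 1)), hpow (r + ((i : ℕ) + 1))]
    linear_combination x.2 i * E1 + (starRingEnd ℂ) (x.2 i) * E2
  simp only [Polynomial.eval_add, Polynomial.eval_mul, Polynomial.eval_pow, Polynomial.eval_C,
    Polynomial.eval_X, Polynomial.eval_finset_sum]
  simp only [harg]
  push_cast
  have hsum : ∑ i : Fin r,
      2 * (((x.2 i * (starRingEnd ℂ) (Complex.exp ((((i : ℕ) : ℂ) + 1) * θ))).re : ℝ) : ℂ)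
        * Complex.exp θ ^ r
      = ∑ i : Fin r, (x.2 i * Complex.exp θ ^ (r - ((i : ℕ) + 1))
          + (starRingEnd ℂ) (x.2 i) * Complex.exp θ ^ (r + ((i : ℕ) + 1))) :=
    Finset.sum_congr rfl fun i _ => hterm i
  calc 2 * ((x.1 : ℂ) * 1 + ∑ i : Fin r,
        (((x.2 i * (starRingEnd ℂ) (Complex.exp ((((i : ℕ) : ℂ) + 1) * θ))).re : ℝ) : ℂ))
        * Complex.exp θ ^ r
      = 2 * (x.1 : ℂ) * Complex.exp θ ^ r + ∑ i : Fin r,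
        2 * (((x.2 i * (starRingEnd ℂ) (Complex.exp ((((i : ℕ) : ℂ) + 1) * θ))).re : ℝ) : ℂ)
          * Complex.exp θ ^ r := by
        rw [mul_add, add_mul, Finset.mul_sum, Finset.sum_mul]
        ring
    _ = _ := by rw [hsum]


lemma aux_pne (r : ℕ) (x : ℝ × (Fin r → ℂ)) (hx : x ≠ 0) :
    (Polynomial.C (2 * (x.1 : ℂ)) * Polynomial.X ^ r +
      ∑ i : Fin r, (Polynomial.C (x.2 i) * Polynomial.X ^ (r - ((i : ℕ) + 1))
        + Polynomial.C ((starRingEnd ℂ) (x.2 i)) * Polynomial.X ^ (r + ((i : ℕ) + 1)))) ≠ 0 := by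
  set p : Polynomial ℂ := Polynomial.C (2 * (x.1 : ℂ)) * Polynomial.X ^ r +
      ∑ i : Fin r, (Polynomial.C (x.2 i) * Polynomial.X ^ (r - ((i : ℕ) + 1))
        + Polynomial.C ((starRingEnd ℂ) (x.2 i)) * Polynomial.X ^ (r + ((i : ℕ) + 1))) with hp
  have hcr : p.coeff r = 2 * (x.1 : ℂ) := by
    rw [hp]
    simp only [Polynomial.coeff_add, Polynomial.finset_sum_coeff, Polynomial.coeff_C_mul,
      Polynomial.coeff_X_pow]
    rw [if_pos trivial]
    have : ∀ i : Fin r, (x.2 i * (if r = r - ((i : ℕ) + 1) then 1 else 0)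
        + (starRingEnd ℂ) (x.2 i) * (if r = r + ((i : ℕ) + 1) then 1 else 0)) = 0 := by
      intro i
      have h1 : r ≠ r - ((i : ℕ) + 1) := by
        have := i.2; omega
      have h2 : r ≠ r + ((i : ℕ) + 1) := by omega
      rw [if_neg h1, if_neg h2]
      ring
    rw [Finset.sum_congr rfl fun i _ => this i]
    simp
  have hci : ∀ i : Fin r, p.coeff (r + ((i : ℕ) + 1)) = (starRingEnd ℂ) (x.2 i) := by
    intro i
    rw [hp]
    simp only [Polynomial.coeff_add, Polynomial.finset_sum_coeff, Polynomial.coeff_C_mul,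
      Polynomial.coeff_X_pow]
    rw [if_neg (by omega : ¬ r + ((i : ℕ) + 1) = r)]
    have : ∀ j : Fin r, (x.2 j * (if r + ((i : ℕ) + 1) = r - ((j : ℕ) + 1) then 1 else 0)
        + (starRingEnd ℂ) (x.2 j) * (if r + ((i : ℕ) + 1) = r + ((j : ℕ) + 1) then 1 else 0))
        = if j = i then (starRingEnd ℂ) (x.2 i) else 0 := by
      intro j
      have h1 : ¬ r + ((i : ℕ) + 1) = r - ((j : ℕ) + 1) := by
        have := j.2; omega
      rw [if_neg h1]
      by_cases hji : j = i
      · subst hji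
        rw [if_pos rfl, if_pos rfl]
        ring
      · have : (j : ℕ) ≠ (i : ℕ) := fun hc => hji (Fin.ext hc)
        rw [if_neg (by omega), if_neg hji]
        ring
    rw [Finset.sum_congr rfl fun j _ => this j, Finset.sum_ite_eq' Finset.univ i,
      if_pos (Finset.mem_univ i)]
    ring
  intro hp0
  apply hx
  have hx1 : x.1 = 0 := by
    have h := hcr
    rw [hp0, Polynomial.coeff_zero] at h
    have : (x.1 : ℂ) = 0 := by
      field_simp at h
      exact_mod_cast (show x.1 = 0 by norm_cast at h; linarith)
    exact_mod_cast this
  have hx2 : ∀ i : Fin r, x.2 i = 0 := by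
    intro i
    have h := hci i
    rw [hp0, Polynomial.coeff_zero] at h
    have : (starRingEnd ℂ) (x.2 i) = 0 := h.symm
    simpa using congrArg (starRingEnd ℂ) this
  rw [Prod.ext_iff]
  exact ⟨hx1, funext hx2⟩

lemma aux_deg (r : ℕ) (x : ℝ × (Fin r → ℂ)) :
    (Polynomial.C (2 * (x.1 : ℂ)) * Polynomial.X ^ r +
      ∑ i : Fin r, (Polynomial.C (x.2 i) * Polynomial.X ^ (r - ((i : ℕ) + 1))
        + Polynomial.C ((starRingEnd ℂ) (x.2 i)) * Polynomial.X ^ (r + ((i : ℕ) + 1)))).natDegree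
      ≤ 2 * r := by
  apply le_trans (Polynomial.natDegree_add_le _ _)
  rw [max_le_iff]
  constructor
  · apply le_trans (Polynomial.natDegree_C_mul_le _ _)
    simp [Polynomial.natDegree_X_pow]
    omega
  · apply Polynomial.natDegree_sum_le_of_forall_le
    intro i _
    apply le_trans (Polynomial.natDegree_add_le _ _)
    rw [max_le_iff]
    have := i.2
    constructor
    · apply le_trans (Polynomial.natDegree_C_mul_le _ _)
      rw [Polynomial.natDegree_X_pow]
      omega
    · apply le_trans (Polynomial.natDegree_C_mul_le _ _)
      rw [Polynomial.natDegree_X_pow]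
      omega


lemma aux_inj (m : ℕ) (hm : 0 < m) (j j' : ℕ) (hj : j < m) (hj' : j' < m)
    (he : Complex.exp (2 * (Real.pi : ℂ) * Complex.I * (j : ℂ) / (m : ℂ))
        = Complex.exp (2 * (Real.pi : ℂ) * Complex.I * (j' : ℂ) / (m : ℂ))) : j = j' := by
  rw [Complex.exp_eq_exp_iff_exists_int] at he
  obtain ⟨nn, hn⟩ := he
  have hm0 : (m : ℂ) ≠ 0 := Nat.cast_ne_zero.mpr hm.ne'
  have hπ : (Real.pi : ℂ) ≠ 0 := Complex.ofReal_ne_zero.mpr Real.pi_ne_zero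
  have hI : Complex.I ≠ 0 := Complex.I_ne_zero
  have key : (j : ℂ) = (j' : ℂ) + nn * m := by
    have hne : (2 : ℂ) * (Real.pi : ℂ) * Complex.I * (m : ℂ) ≠ 0 := by
      simp [hπ, hI, hm0]
    field_simp at hn
    have h2 : (2 : ℂ) * (Real.pi : ℂ) * Complex.I ≠ 0 := by simp [hπ, hI]
    exact mul_left_cancel₀ h2 (by linear_combination (2 * (Real.pi : ℂ) * Complex.I) * hn)
  have keyZ : (j : ℤ) = (j' : ℤ) + nn * m := by exact_mod_cast key
  have hb1 : -(m : ℤ) < nn * m := by omega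
  have hb2 : nn * (m : ℤ) < m := by omega
  have hmz : (0:ℤ) < (m:ℤ) := by exact_mod_cast hm
  have hn0 : nn = 0 := by
    rcases lt_trichotomy nn 0 with hlt | heq | hgt
    · exfalso
      have : nn ≤ -1 := by omega
      nlinarith
    · exact heq
    · exfalso
      have : 1 ≤ nn := by omega
      nlinarith
  rw [hn0] at keyZ
  omega

lemma aux_comp_re {G : ℝ → ℂ} {d : ℂ} {t₀ : ℝ} (hG : HasDerivAt G d t₀) :
    HasDerivAt (fun t => (G t).re) d.re t₀ := by
  simpa [Function.comp_def] using (Complex.reCLM.hasFDerivAt.comp t₀ hG.hasFDerivAt).hasDerivAt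

lemma aux_comp_im {G : ℝ → ℂ} {d : ℂ} {t₀ : ℝ} (hG : HasDerivAt G d t₀) :
    HasDerivAt (fun t => (G t).im) d.im t₀ := by
  simpa [Function.comp_def] using (Complex.imCLM.hasFDerivAt.comp t₀ hG.hasFDerivAt).hasDerivAt

/-- For `m = 2n+k`, `k = 2r`, nonzero `x ∈ ℝ × ℂ^r`, the function
`h(t) = 2⟨x, (1, e^{2πit/m}, …, e^{2πirt/m})⟩` changes sign at every `t₀` where
`e^{2πit₀/m}` is a simple root of the associated polynomial
`p(z) = x_r + … + x_1 z^{r-1} + 2x_0 z^r + conj(x_1) z^{r+1} + … + conj(x_r) z^{2r}`.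
Consequently the sign vector `(sign⟨x,v_0⟩, …, sign⟨x,v_{m-1}⟩)` has at most `k`
zeros. -/
theorem stmt16 (n k r m : ℕ) (hk : k = 2 * r) (hm : m = 2 * n + k) (hkm : k < m)
    (x : ℝ × (Fin r → ℂ)) (hx : x ≠ 0) :
    let ip : (ℝ × (Fin r → ℂ)) → (ℝ × (Fin r → ℂ)) → ℝ := fun x y =>
      x.1 * y.1 + ∑ i, (x.2 i * (starRingEnd ℂ) (y.2 i)).re
    let w : ℝ → ℝ × (Fin r → ℂ) := fun t =>
      (1, fun i => Complex.exp
        (2 * (Real.pi : ℂ) * Complex.I * (((i : ℕ) : ℂ) + 1) * (t : ℂ) / (m : ℂ)))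
    let h : ℝ → ℝ := fun t => 2 * ip x (w t)
    let p : Polynomial ℂ := Polynomial.C (2 * (x.1 : ℂ)) * Polynomial.X ^ r +
      ∑ i : Fin r, (Polynomial.C (x.2 i) * Polynomial.X ^ (r - ((i : ℕ) + 1))
        + Polynomial.C ((starRingEnd ℂ) (x.2 i)) * Polynomial.X ^ (r + ((i : ℕ) + 1)))
    (∀ t₀ : ℝ,
        p.eval (Complex.exp (2 * (Real.pi : ℂ) * Complex.I * (t₀ : ℂ) / (m : ℂ))) = 0 →
        (Polynomial.derivative p).eval
            (Complex.exp (2 * (Real.pi : ℂ) * Complex.I * (t₀ : ℂ) / (m : ℂ))) ≠ 0 →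
        ∃ δ > 0, ∀ t₁ t₂ : ℝ, t₀ - δ < t₁ → t₁ < t₀ → t₀ < t₂ → t₂ < t₀ + δ →
          h t₁ * h t₂ < 0) ∧
      ((Finset.range m).filter fun j => h j = 0).card ≤ k := by
  intro ip w h p
  have hm0 : 0 < m := lt_of_le_of_lt (Nat.zero_le k) hkm
  have hmC : (m : ℂ) ≠ 0 := Nat.cast_ne_zero.mpr hm0.ne'
  have hπ : (Real.pi : ℂ) ≠ 0 := Complex.ofReal_ne_zero.mpr Real.pi_ne_zero
  have key : ∀ t : ℝ, ((h t : ℝ) : ℂ) *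
      Complex.exp (2 * (Real.pi : ℂ) * Complex.I * (t : ℂ) / (m : ℂ)) ^ r =
      p.eval (Complex.exp (2 * (Real.pi : ℂ) * Complex.I * (t : ℂ) / (m : ℂ))) := fun t =>
    aux_key r m x t
  have hzero : ∀ t : ℝ, (h t = 0 ↔
      p.eval (Complex.exp (2 * (Real.pi : ℂ) * Complex.I * (t : ℂ) / (m : ℂ))) = 0) := by
    intro t
    constructor
    · intro h0
      rw [← key t, h0]
      simp
    · intro hp0
      have := key t
      rw [hp0, mul_eq_zero] at this
      rcases this with h1 | h2
      · exact_mod_cast h1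
      · exact absurd h2 (pow_ne_zero _ (Complex.exp_ne_zero _))
  have hpne : p ≠ 0 := aux_pne r x hx
  constructor
  · -- sign change part
    intro t₀ hp0 hp'
    set c : ℂ := 2 * (Real.pi : ℂ) * Complex.I / (m : ℂ) with hc
    have hcne : c ≠ 0 := by
      rw [hc]
      simp [hπ, hmC, Complex.I_ne_zero]
    have hct : ∀ t : ℝ, 2 * (Real.pi : ℂ) * Complex.I * (t : ℂ) / (m : ℂ) = c * t := by
      intro t; rw [hc]; ring
    set z₀ : ℂ := Complex.exp (c * t₀) with hz₀
    rw [hct t₀] at hp0 hp'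
    set G : ℝ → ℂ := fun t =>
      Complex.exp ((-(r : ℂ) * c) * t) * p.eval (Complex.exp (c * t)) with hG
    have hGr : ∀ t : ℝ, G t = ((h t : ℝ) : ℂ) := by
      intro t
      rw [hG]
      simp only
      rw [← hct t, ← key t, hct t]
      rw [← Complex.exp_nat_mul]
      rw [mul_comm (((h t : ℝ) : ℂ)) _, ← mul_assoc, ← Complex.exp_add]
      rw [show (-(r : ℂ) * c) * (t : ℂ) + (r : ℂ) * (c * (t : ℂ)) = 0 by ring]
      rw [Complex.exp_zero, one_mul]
    have hd1 := aux_exp_deriv (-(r : ℂ) * c) t₀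
    have hd2 := aux_exp_deriv c t₀
    have hd3 : HasDerivAt (fun t : ℝ => p.eval (Complex.exp (c * t)))
        ((c * z₀) • (Polynomial.derivative p).eval z₀) t₀ := by
      have := (Polynomial.hasDerivAt p z₀).scomp t₀ hd2
      simpa [Function.comp_def] using this
    set d : ℂ := Complex.exp ((-(r : ℂ) * c) * t₀) * ((c * z₀) *
      (Polynomial.derivative p).eval z₀) with hd
    have hG' : HasDerivAt G d t₀ := by
      have h4 := hd1.mul hd3
      rw [hp0] at h4
      have h5 : d = (-(r : ℂ) * c) * Complex.exp ((-(r : ℂ) * c) * t₀) * 0 +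
          Complex.exp ((-(r : ℂ) * c) * t₀) *
            ((c * z₀) • (Polynomial.derivative p).eval z₀) := by
        rw [hd]; simp only [smul_eq_mul]; ring
      rw [hG, h5]
      exact h4
    have hdim : d.im = 0 := by
      have h1 : (fun t : ℝ => (G t).im) = fun _ : ℝ => (0 : ℝ) := by
        funext t
        rw [hGr t]
        simp
      have h2 := aux_comp_im hG'
      rw [h1] at h2
      exact h2.unique (hasDerivAt_const t₀ 0)
    have hdne : d ≠ 0 := by
      rw [hd]
      apply mul_ne_zero (Complex.exp_ne_zero _)
      exact mul_ne_zero (mul_ne_zero hcne (Complex.exp_ne_zero _)) hp'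
    have hdre : d.re ≠ 0 := by
      intro hre
      exact hdne (Complex.ext hre hdim)
    have hh' : HasDerivAt h d.re t₀ := by
      have h1 : (fun t : ℝ => (G t).re) = h := by
        funext t
        rw [hGr t]
        simp
      have h2 := aux_comp_re hG'
      rwa [h1] at h2
    have h0 : h t₀ = 0 := by
      rw [hzero t₀, hct t₀]
      exact hp0
    exact aux_sign_change hh' h0 hdre
  · -- cardinality part
    set T : Finset ℕ := (Finset.range m).filter (fun a : ℕ => h a = 0) with hT
    have hS : ((Finset.range m).filter fun j => h j = 0 : Finset ℝ)
        = T.image (fun a : ℕ => (a : ℝ)) := by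
      ext j
      rw [Finset.mem_filter, Finset.mem_image]
      simp only [hT, Finset.mem_filter, Finset.mem_range]
      constructor
      · rintro ⟨hmem, hj0⟩
        simp only [Finset.bind_def, Finset.mem_sup, Finset.mem_range, Finset.pure_def,
          Finset.mem_singleton] at hmem
        obtain ⟨a, ha, rfl⟩ := hmem
        exact ⟨a, ⟨ha, hj0⟩, rfl⟩
      · rintro ⟨a, ⟨ha, ha0⟩, rfl⟩
        refine ⟨?_, ha0⟩
        simp only [Finset.bind_def, Finset.mem_sup, Finset.mem_range, Finset.pure_def,
          Finset.mem_singleton]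
        exact ⟨a, ha, rfl⟩
    rw [hS]
    apply le_trans (Finset.card_image_le)
    have hcard : ∀ j ∈ T,
        Complex.exp (2 * (Real.pi : ℂ) * Complex.I * (j : ℂ) / (m : ℂ)) ∈
          p.roots.toFinset := by
      intro j hj
      rw [hT, Finset.mem_filter, Finset.mem_range] at hj
      rw [Multiset.mem_toFinset, Polynomial.mem_roots hpne]
      show p.eval _ = 0
      have := (hzero (j : ℝ)).mp hj.2
      rwa [show (((j : ℝ) : ℂ)) = ((j : ℕ) : ℂ) by push_cast; ring] at this
    have hinj : Set.InjOn (fun j : ℕ =>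
        Complex.exp (2 * (Real.pi : ℂ) * Complex.I * (j : ℂ) / (m : ℂ))) T := by
      intro a ha b hb hab
      rw [hT, Finset.coe_filter, Set.mem_setOf_eq, Finset.mem_range] at ha hb
      exact aux_inj m hm0 a b ha.1 hb.1 hab
    calc T.card
        ≤ p.roots.toFinset.card := Finset.card_le_card_of_injOn _ hcard hinj
      _ ≤ Multiset.card p.roots := p.roots.toFinset_card_le
      _ ≤ p.natDegree := p.card_roots'
      _ ≤ 2 * r := aux_deg r x
      _ = k := hk.symm
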